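/- Let m ≤ M and N ≥ 0 be real numbers, let φ : ℝ → ℝ be a nonnegative measurable function with ∫_0^∞ φ(t) dt < ∞, and let f, g : ℝ × ℝ → ℝ be measurable functions with |f(x,y)| ≤ N and |g(x,y)| ≤ N for all (x,y). Suppose that f(x,y) = g(x,y) for every (x,y) with x < y such that x ∉ [m,M] and y ∉ [m,M] (i.e., f and g agree off the band ([m,M] × ℝ) ∪ (ℝ × [m,M])). Then ∫_{{(x,y) ∈ ℝ² : x < y}} (f(x,y) − g(x,y))² φ(y−x) d(x,y) < ∞. -/

import Mathlib

open MeasureTheory ENNReal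

lemma shift_lint (h : ℝ → ℝ≥0∞) (hm : Measurable h) (a : ℝ) :
    ∫⁻ y in Set.Ioi a, h (y - a) = ∫⁻ t in Set.Ioi (0:ℝ), h t := by
  have hmp := measurePreserving_add_right (volume : Measure ℝ) a
  have hF : Measurable fun y => (Set.Ioi a).indicator (fun y => h (y - a)) y :=
    (Measurable.indicator (hm.comp (measurable_id.sub_const a)) measurableSet_Ioi)
  rw [← lintegral_indicator measurableSet_Ioi _, ← lintegral_indicator measurableSet_Ioi _,
    ← hmp.lintegral_comp hF]
  refine lintegral_congr fun t => ?_
  by_cases ht : 0 < t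
  · simp [Set.indicator, Set.mem_Ioi, ht, lt_add_iff_pos_left]
  · simp [Set.indicator, Set.mem_Ioi, ht, lt_add_iff_pos_left]

lemma refl_lint (h : ℝ → ℝ≥0∞) (hm : Measurable h) (a : ℝ) :
    ∫⁻ x in Set.Iio a, h (a - x) = ∫⁻ t in Set.Ioi (0:ℝ), h t := by
  have hmp := Measure.measurePreserving_sub_left (volume : Measure ℝ) a
  have hF : Measurable fun x => (Set.Iio a).indicator (fun x => h (a - x)) x :=
    (Measurable.indicator (hm.comp (measurable_const.sub measurable_id)) measurableSet_Iio)
  rw [← lintegral_indicator measurableSet_Iio _, ← lintegral_indicator measurableSet_Ioi _,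
    ← hmp.lintegral_comp hF]
  refine lintegral_congr fun t => ?_
  by_cases ht : 0 < t
  · simp [Set.indicator, Set.mem_Ioi, Set.mem_Iio, ht, sub_lt_self_iff, sub_sub_cancel]
  · simp [Set.indicator, Set.mem_Ioi, Set.mem_Iio, ht, sub_lt_self_iff]

theorem finite_weighted_sq_distance_of_bounded_band_agreement
    (m M N : ℝ) (hmM : m ≤ M) (hN : 0 ≤ N)
    (φ : ℝ → ℝ) (hφ0 : ∀ t, 0 ≤ φ t) (hφm : Measurable φ)
    (hφint : ∫⁻ t in Set.Ioi (0 : ℝ), ENNReal.ofReal (φ t) < ⊤)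
    (f g : ℝ × ℝ → ℝ) (hf : Measurable f) (hg : Measurable g)
    (hfN : ∀ p, |f p| ≤ N) (hgN : ∀ p, |g p| ≤ N)
    (hagree : ∀ p : ℝ × ℝ, p.1 < p.2 → p.1 ∉ Set.Icc m M → p.2 ∉ Set.Icc m M →
      f p = g p) :
    ∫⁻ p in {q : ℝ × ℝ | q.1 < q.2},
      ENNReal.ofReal ((f p - g p) ^ 2 * φ (p.2 - p.1)) < ⊤ := by
  set C := ∫⁻ t in Set.Ioi (0:ℝ), ENNReal.ofReal (φ t) with hC
  set F : ℝ × ℝ → ℝ≥0∞ := fun p => ENNReal.ofReal (φ (p.2 - p.1)) with hFdef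
  have hFm : Measurable F := (hφm.comp (measurable_snd.sub measurable_fst)).ennreal_ofReal
  set K : ℝ≥0∞ := ENNReal.ofReal ((2*N)^2) with hK
  set H : ℝ × ℝ → ℝ≥0∞ := fun p => ENNReal.ofReal ((f p - g p) ^ 2 * φ (p.2 - p.1)) with hH
  set s : Set (ℝ × ℝ) := {q : ℝ × ℝ | q.1 < q.2} with hsdef
  set A : Set (ℝ × ℝ) := Set.Icc m M ×ˢ (Set.univ : Set ℝ) with hAdef
  set B : Set (ℝ × ℝ) := (Set.univ : Set ℝ) ×ˢ Set.Icc m M with hBdef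
  have hs : MeasurableSet s := measurableSet_lt measurable_fst measurable_snd
  have hA : MeasurableSet A := measurableSet_Icc.prod MeasurableSet.univ
  have hB : MeasurableSet B := MeasurableSet.univ.prod measurableSet_Icc
  -- pointwise bound
  have hpt : ∀ p, H p ≤ K * F p := by
    intro p
    have h1 : (f p - g p) ^ 2 ≤ (2*N)^2 := by
      have := (hfN p); have := (hgN p)
      have habs : |f p - g p| ≤ 2*N := by
        calc |f p - g p| ≤ |f p| + |g p| := abs_sub _ _
        _ ≤ 2*N := by linarith
      calc (f p - g p)^2 = |f p - g p|^2 := (sq_abs _).symm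
      _ ≤ (2*N)^2 := by
          apply pow_le_pow_left₀ (abs_nonneg _) habs
    calc H p ≤ ENNReal.ofReal ((2*N)^2 * φ (p.2 - p.1)) := by
          apply ENNReal.ofReal_le_ofReal
          exact mul_le_mul_of_nonneg_right h1 (hφ0 _)
    _ = K * F p := ENNReal.ofReal_mul (by positivity)
  -- vanish off band
  have hvan : ∀ p ∈ s \ (A ∪ B), H p = 0 := by
    intro p hp
    obtain ⟨hps, hpn⟩ := hp
    simp only [Set.mem_union, hAdef, hBdef, Set.mem_prod, Set.mem_univ, and_true, true_and,
      not_or] at hpn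
    have := hagree p hps hpn.1 hpn.2
    simp [hH, this]
  have hCfin : C < ⊤ := hφint
  -- inner computations
  have hindm : Measurable ((s ∩ A).indicator F) := hFm.indicator (hs.inter hA)
  have hindmB : Measurable ((s ∩ B).indicator F) := hFm.indicator (hs.inter hB)
  have JA : ∫⁻ p in s ∩ A, F p = C * ENNReal.ofReal (M - m) := by
    rw [← lintegral_indicator (hs.inter hA) _, Measure.volume_eq_prod ℝ ℝ,
      lintegral_prod _ hindm.aemeasurable]
    have inner : ∀ x : ℝ, (∫⁻ y, (s ∩ A).indicator F (x, y)) =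
        (Set.Icc m M).indicator (fun _ => C) x := by
      intro x
      by_cases hx : x ∈ Set.Icc m M
      · have : ∀ y : ℝ, (s ∩ A).indicator F (x, y)
            = (Set.Ioi x).indicator (fun y => ENNReal.ofReal (φ (y - x))) y := by
          intro y
          by_cases hy : x < y
          · simp [Set.indicator, hsdef, hAdef, Set.mem_prod, hx, hy, Set.mem_Ioi, F]
          · simp [Set.indicator, hsdef, hAdef, Set.mem_prod, hx, hy, Set.mem_Ioi, F]
        rw [lintegral_congr this, lintegral_indicator measurableSet_Ioi _,
          shift_lint _ hφm.ennreal_ofReal x]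
        simp [Set.indicator, hx, hC]
      · have : ∀ y : ℝ, (s ∩ A).indicator F (x, y) = 0 := by
          intro y; simp [Set.indicator, hAdef, Set.mem_prod, hx]
        rw [lintegral_congr this]; simp [Set.indicator, hx]
    rw [lintegral_congr inner, lintegral_indicator measurableSet_Icc _,
      setLIntegral_const, Real.volume_Icc, mul_comm]
  have JB : ∫⁻ p in s ∩ B, F p = C * ENNReal.ofReal (M - m) := by
    rw [← lintegral_indicator (hs.inter hB) _, Measure.volume_eq_prod ℝ ℝ,
      lintegral_prod_symm _ hindmB.aemeasurable]
    have inner : ∀ y : ℝ, (∫⁻ x, (s ∩ B).indicator F (x, y)) =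
        (Set.Icc m M).indicator (fun _ => C) y := by
      intro y
      by_cases hy : y ∈ Set.Icc m M
      · have : ∀ x : ℝ, (s ∩ B).indicator F (x, y)
            = (Set.Iio y).indicator (fun x => ENNReal.ofReal (φ (y - x))) x := by
          intro x
          by_cases hx : x < y
          · simp [Set.indicator, hsdef, hBdef, Set.mem_prod, hx, hy, Set.mem_Iio, F]
          · simp [Set.indicator, hsdef, hBdef, Set.mem_prod, hx, hy, Set.mem_Iio, F]
        rw [lintegral_congr this, lintegral_indicator measurableSet_Iio _,
          refl_lint _ hφm.ennreal_ofReal y]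
        simp [Set.indicator, hy, hC]
      · have : ∀ x : ℝ, (s ∩ B).indicator F (x, y) = 0 := by
          intro x; simp [Set.indicator, hBdef, Set.mem_prod, hy]
        rw [lintegral_congr this]; simp [Set.indicator, hy]
    rw [lintegral_congr inner, lintegral_indicator measurableSet_Icc _,
      setLIntegral_const, Real.volume_Icc, mul_comm]
  -- main estimate
  have step1 : ∫⁻ p in s, H p ≤
      (∫⁻ p in s ∩ A, H p) + ((∫⁻ p in s ∩ B, H p) + (∫⁻ p in s \ (A ∪ B), H p)) := by
    calc ∫⁻ p in s, H p ≤ ∫⁻ p in (s ∩ A) ∪ ((s ∩ B) ∪ (s \ (A ∪ B))), H p := by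
          apply lintegral_mono_set
          intro p hp
          by_cases hpA : p ∈ A
          · exact Or.inl ⟨hp, hpA⟩
          · by_cases hpB : p ∈ B
            · exact Or.inr (Or.inl ⟨hp, hpB⟩)
            · exact Or.inr (Or.inr ⟨hp, fun h => h.elim hpA hpB⟩)
    _ ≤ _ := le_trans (lintegral_union_le _ _ _)
          (add_le_add (le_refl _) (lintegral_union_le _ _ _))
  have h3 : ∫⁻ p in s \ (A ∪ B), H p = 0 := by
    rw [setLIntegral_congr_fun (hs.diff (hA.union hB)) hvan]
    simp
  have h1 : ∫⁻ p in s ∩ A, H p ≤ K * (C * ENNReal.ofReal (M - m)) := by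
    calc ∫⁻ p in s ∩ A, H p ≤ ∫⁻ p in s ∩ A, K * F p := lintegral_mono hpt
    _ = K * ∫⁻ p in s ∩ A, F p := lintegral_const_mul K hFm
    _ = _ := by rw [JA]
  have h2 : ∫⁻ p in s ∩ B, H p ≤ K * (C * ENNReal.ofReal (M - m)) := by
    calc ∫⁻ p in s ∩ B, H p ≤ ∫⁻ p in s ∩ B, K * F p := lintegral_mono hpt
    _ = K * ∫⁻ p in s ∩ B, F p := lintegral_const_mul K hFm
    _ = _ := by rw [JB]
  have hfin : K * (C * ENNReal.ofReal (M - m)) < ⊤ :=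
    ENNReal.mul_lt_top ENNReal.ofReal_lt_top
      (ENNReal.mul_lt_top hCfin ENNReal.ofReal_lt_top)
  calc ∫⁻ p in s, H p ≤ _ := step1
  _ ≤ K * (C * ENNReal.ofReal (M - m)) + (K * (C * ENNReal.ofReal (M - m)) + 0) := by
      exact add_le_add h1 (add_le_add h2 (le_of_eq h3))
  _ < ⊤ := by
      simp only [add_zero]
      exact ENNReal.add_lt_top.mpr ⟨hfin, hfin⟩
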